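/- Let p, q be natural numbers, X and Y types, and G = Equiv.Perm (Fin p ⊕ Fin q), acting on functions f : Fin p ⊕ Fin q → X ⊕ Y by σ • f = f ∘ σ⁻¹. Let L be the subgroup of G which is the image of Equiv.Perm (Fin p) × Equiv.Perm (Fin q) under the sum-congruence embedding (the Young subgroup S_p × S_q), and let H be any subgroup of G. Let A^{p,q} denote the set of H-orbits of those functions f : Fin p ⊕ Fin q → X ⊕ Y for which exactly p elements of Fin p ⊕ Fin q are sent by f into the left summand X. Fix a set T of representatives σ ∈ G for the double cosets L\G/H. Then A^{p,q} is in bijection with the disjoint union, over σ ∈ T, of the orbit spaces of (Fin p → X) × (Fin q → Y) under the action of the subgroup L ∩ σHσ⁻¹, where an element of L ∩ σHσ⁻¹, written via the Young embedding as a pair (a, b) with a ∈ Equiv.Perm (Fin p) and b ∈ Equiv.Perm (Fin q), acts on (u, v) by ((u ∘ a⁻¹), (v ∘ b⁻¹)). -/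

import Mathlib

open Equiv Finset

private def isLeftEquiv {α β : Type*} : {x : α ⊕ β // x.isLeft} ≃ α where
  toFun x := x.1.getLeft x.2
  invFun a := ⟨.inl a, rfl⟩
  left_inv := by rintro ⟨(a | b), h⟩ <;> simp_all
  right_inv a := rfl

private lemma card_isLeft (p q : ℕ) :
    (Finset.univ.filter fun i : Fin p ⊕ Fin q => i.isLeft).card = p := by
  rw [← Fintype.card_subtype]
  rw [Fintype.card_congr (isLeftEquiv (α := Fin p) (β := Fin q)), Fintype.card_fin]

private lemma card_isLeft_comp {p q : ℕ} {X Y : Type*} (σ : Equiv.Perm (Fin p ⊕ Fin q))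
    (u : Fin p → X) (v : Fin q → Y) :
    (Finset.univ.filter fun i => ((Sum.map u v ∘ ⇑σ) i).isLeft).card = p := by
  have h1 : (Finset.univ.filter fun i => ((Sum.map u v ∘ ⇑σ) i).isLeft)
      = Finset.univ.filter fun i => (σ i).isLeft := by
    apply Finset.filter_congr; intro i _; simp [Sum.isLeft_map]
  rw [h1]
  conv_rhs => rw [← card_isLeft p q]
  apply Finset.card_bij (fun i _ => σ i)
  · intro a ha; simp_all
  · intro a _ b _ h; exact σ.injective h
  · intro b hb; exact ⟨σ.symm b, by simp_all, by simp⟩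

private lemma sumMap_factor {p q : ℕ} {X Y : Type*} (e : Equiv.Perm (Fin p ⊕ Fin q))
    {u u' : Fin p → X} {v v' : Fin q → Y}
    (h : ∀ x, Sum.map u' v' x = Sum.map u v (e x)) :
    ∃ (a : Equiv.Perm (Fin p)) (b : Equiv.Perm (Fin q)),
      e = Equiv.sumCongr a b ∧ u' = u ∘ ⇑a ∧ v' = v ∘ ⇑b := by
  have hl : ∀ i : Fin p, ∃ j, e (Sum.inl i) = Sum.inl j := by
    intro i
    have := h (Sum.inl i)
    rcases he : e (Sum.inl i) with j | j
    · exact ⟨j, rfl⟩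
    · rw [he] at this; simp at this
  choose a0 ha0 using hl
  have ha0inj : Function.Injective a0 := by
    intro i j hij
    have : e (Sum.inl i) = e (Sum.inl j) := by rw [ha0, ha0, hij]
    exact Sum.inl_injective (e.injective this)
  have ha0bij : Function.Bijective a0 := (Finite.injective_iff_bijective).mp ha0inj
  have hr : ∀ j : Fin q, ∃ k, e (Sum.inr j) = Sum.inr k := by
    intro j
    rcases he : e (Sum.inr j) with k | k
    · obtain ⟨i, hi⟩ := ha0bij.2 k
      exfalso
      have : e (Sum.inl i) = e (Sum.inr j) := by rw [ha0, hi, he]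
      exact absurd (e.injective this) (by simp)
    · exact ⟨k, rfl⟩
  choose b0 hb0 using hr
  have hb0inj : Function.Injective b0 := by
    intro i j hij
    have : e (Sum.inr i) = e (Sum.inr j) := by rw [hb0, hb0, hij]
    exact Sum.inr_injective (e.injective this)
  have hb0bij := (Finite.injective_iff_bijective).mp hb0inj
  refine ⟨Equiv.ofBijective a0 ha0bij, Equiv.ofBijective b0 hb0bij, ?_, ?_, ?_⟩
  · ext x; cases x with
    | inl i => simp [ha0, Equiv.ofBijective]
    | inr j => simp [hb0, Equiv.ofBijective]
  · funext i
    have := h (Sum.inl i)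
    rw [ha0] at this
    simpa using this
  · funext j
    have := h (Sum.inr j)
    rw [hb0] at this
    simpa using this

private lemma exists_decomp {p q : ℕ} {X Y : Type*} (f : Fin p ⊕ Fin q → X ⊕ Y)
    (hf : (Finset.univ.filter fun i => (f i).isLeft).card = p) :
    ∃ (u : Fin p → X) (v : Fin q → Y) (σ : Equiv.Perm (Fin p ⊕ Fin q)),
      f = Sum.map u v ∘ ⇑σ := by
  classical
  set Pf : Fin p ⊕ Fin q → Prop := fun i => (f i).isLeft = true with hPf
  have c1 : Fintype.card {i // Pf i} = p := by rw [Fintype.card_subtype]; exact hf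
  have c2 : Fintype.card {i // ¬ Pf i} = q := by
    rw [Fintype.card_subtype_compl, c1]
    simp
  let ep := Fintype.equivFinOfCardEq c1
  let eQ := Fintype.equivFinOfCardEq c2
  let e0 : Fin p ⊕ Fin q ≃ Fin p ⊕ Fin q :=
    (Equiv.sumCongr ep.symm eQ.symm).trans (Equiv.sumCompl Pf)
  have hu : ∀ i : Fin p, ∃ a, f ((ep.symm i : {i // Pf i}) : Fin p ⊕ Fin q) = Sum.inl a :=
    fun i => Sum.isLeft_iff.mp (ep.symm i).2
  have hv : ∀ j : Fin q, ∃ b, f ((eQ.symm j : {i // ¬ Pf i}) : Fin p ⊕ Fin q) = Sum.inr b := by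
    intro j
    exact Sum.isRight_iff.mp (Sum.not_isLeft.mp (eQ.symm j).2)
  choose u hu' using hu
  choose v hv' using hv
  refine ⟨u, v, e0.symm, ?_⟩
  have key : ∀ y, f (e0 y) = Sum.map u v y := by
    intro y; cases y with
    | inl i => simpa [e0] using hu' i
    | inr j => simpa [e0] using hv' j
  funext x
  calc f x = f (e0 (e0.symm x)) := by rw [Equiv.apply_symm_apply]
    _ = Sum.map u v (e0.symm x) := key _



/-- The orbit equivalence relation on those functions `f : α → Z` satisfying `P`, for the
action of a subgroup `H` of `Equiv.Perm α` given by `σ • f = f ∘ ⇑σ⁻¹`. -/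
def permSetoidOn {α Z : Type*} (H : Subgroup (Equiv.Perm α)) (P : (α → Z) → Prop) :
    Setoid {f : α → Z // P f} where
  r f g := ∃ σ ∈ H, (g : α → Z) = (f : α → Z) ∘ ⇑σ⁻¹
  iseqv := by
    refine ⟨fun f => ⟨1, H.one_mem, by simp⟩, ?_, ?_⟩
    · rintro f g ⟨σ, hσ, h⟩
      exact ⟨σ⁻¹, H.inv_mem hσ, by rw [h]; ext x; simp⟩
    · rintro f g h ⟨σ, hσ, h1⟩ ⟨τ, hτ, h2⟩
      exact ⟨τ * σ, H.mul_mem hτ hσ, by rw [h2, h1]; ext x; simp⟩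

/-- The orbit equivalence relation on `(Fin p → X) × (Fin q → Y)` under the subgroup
`W ≤ Equiv.Perm (Fin p ⊕ Fin q)`: two pairs are equivalent when they differ by an element of
`W` of the form `Equiv.sumCongr a b` (necessarily in the Young subgroup `S_p × S_q`), acting by
`(a, b) • (u, v) = (u ∘ ⇑a⁻¹, v ∘ ⇑b⁻¹)`. -/
def prodPermSetoid (p q : ℕ) (X Y : Type*) (W : Subgroup (Equiv.Perm (Fin p ⊕ Fin q))) :
    Setoid ((Fin p → X) × (Fin q → Y)) where
  r uv uv' := ∃ (a : Equiv.Perm (Fin p)) (b : Equiv.Perm (Fin q)),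
      Equiv.Perm.sumCongrHom (Fin p) (Fin q) (a, b) ∈ W ∧
        uv'.1 = uv.1 ∘ ⇑a⁻¹ ∧ uv'.2 = uv.2 ∘ ⇑b⁻¹
  iseqv := by
    refine ⟨fun uv => ⟨1, 1, by simpa using W.one_mem, by simp, by simp⟩, ?_, ?_⟩
    · rintro uv uv' ⟨a, b, hW, h1, h2⟩
      refine ⟨a⁻¹, b⁻¹, ?_, by rw [h1]; ext x; simp, by rw [h2]; ext x; simp⟩
      simpa using W.inv_mem hW
    · rintro uv uv' uv'' ⟨a, b, hW, h1, h2⟩ ⟨a', b', hW', h1', h2'⟩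
      refine ⟨a' * a, b' * b, ?_, by rw [h1', h1]; ext x; simp, by rw [h2', h2]; ext x; simp⟩
      simpa using W.mul_mem hW' hW

/-- The key bijection in the addition axiom for the β-operations: for a subgroup `H` of
`Equiv.Perm (Fin p ⊕ Fin q)`, the set `A^{p,q}` of `H`-orbits of functions
`Fin p ⊕ Fin q → X ⊕ Y` sending exactly `p` elements into `X` is in bijection with the
disjoint union, over a set `T` of representatives of the double cosets `L\G/H` (with
`L = S_p × S_q` the Young subgroup), of the orbit spaces of `(Fin p → X) × (Fin q → Y)` under
`L ∩ σHσ⁻¹`. -/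

theorem stmt3 (p q : ℕ) (X Y : Type*)
    (L H : Subgroup (Equiv.Perm (Fin p ⊕ Fin q)))
    (hL : L = (Equiv.Perm.sumCongrHom (Fin p) (Fin q)).range)
    (T : Set (Equiv.Perm (Fin p ⊕ Fin q)))
    (hT : Function.Bijective fun t : T => DoubleCoset.mk L H (t : Equiv.Perm (Fin p ⊕ Fin q))) :
    Nonempty (
      Quotient (permSetoidOn H (fun f : Fin p ⊕ Fin q → X ⊕ Y =>
        (Finset.univ.filter fun i => (f i).isLeft).card = p)) ≃
      Σ t : T, Quotient (prodPermSetoid p q X Y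
        (L ⊓ Subgroup.map
          (MulAut.conj (t : Equiv.Perm (Fin p ⊕ Fin q))).toMonoidHom H))) := by
  classical
  let Q := Quotient (permSetoidOn H (fun f : Fin p ⊕ Fin q → X ⊕ Y =>
        (Finset.univ.filter fun i => (f i).isLeft).card = p))
  let W : T → Subgroup (Equiv.Perm (Fin p ⊕ Fin q)) := fun t =>
    L ⊓ Subgroup.map (MulAut.conj (t : Equiv.Perm (Fin p ⊕ Fin q))).toMonoidHom H
  let F0 : ∀ _ : T, (Fin p → X) × (Fin q → Y) → Q := fun t uv =>
    Quotient.mk _ ⟨Sum.map uv.1 uv.2 ∘ ⇑(t : Equiv.Perm (Fin p ⊕ Fin q)),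
      card_isLeft_comp _ _ _⟩
  have welldef : ∀ (t : T) (uv uv' : (Fin p → X) × (Fin q → Y)),
      (prodPermSetoid p q X Y (W t)).r uv uv' → F0 t uv = F0 t uv' := by
    rintro t ⟨u, v⟩ ⟨u', v'⟩ ⟨a, b, hW, h1, h2⟩
    obtain ⟨hWL, hWc⟩ := hW
    obtain ⟨h, hh, hconj⟩ := Subgroup.mem_map.mp hWc
    apply Quotient.sound
    refine ⟨h, hh, ?_⟩
    simp only [MulEquiv.coe_toMonoidHom, MulAut.conj_apply,
      Equiv.Perm.sumCongrHom_apply] at hconj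
    have hinv : (h⁻¹ : Equiv.Perm (Fin p ⊕ Fin q))
        = (t : Equiv.Perm (Fin p ⊕ Fin q))⁻¹
          * ((t : Equiv.Perm (Fin p ⊕ Fin q)) * h * (t : Equiv.Perm (Fin p ⊕ Fin q))⁻¹)⁻¹
          * (t : Equiv.Perm (Fin p ⊕ Fin q)) := by group
    rw [hconj] at hinv
    replace h1 : u' = u ∘ ⇑a⁻¹ := h1
    replace h2 : v' = v ∘ ⇑b⁻¹ := h2
    funext x
    simp only [Function.comp_apply, hinv, Equiv.Perm.mul_apply,
      Equiv.Perm.coe_inv, Equiv.apply_symm_apply, h1, h2]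
    rcases (t : Equiv.Perm (Fin p ⊕ Fin q)) x with i | j <;> simp
  let F : (Σ t : T, Quotient (prodPermSetoid p q X Y (W t))) → Q :=
    fun x => Quotient.liftOn x.2 (F0 x.1) (welldef x.1)
  have hinj : Function.Injective F := by
    rintro ⟨t, c⟩ ⟨t', c'⟩ hFt
    obtain ⟨⟨u, v⟩, rfl⟩ := Quotient.exists_rep c
    obtain ⟨⟨u', v'⟩, rfl⟩ := Quotient.exists_rep c'
    obtain ⟨h, hh, heq⟩ := Quotient.exact hFt
    have hpt : ∀ y, Sum.map u' v' y
        = Sum.map u v (((t : Equiv.Perm (Fin p ⊕ Fin q)) * h⁻¹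
            * (t' : Equiv.Perm (Fin p ⊕ Fin q))⁻¹) y) := by
      intro y
      have h2 := congrFun heq ((t' : Equiv.Perm (Fin p ⊕ Fin q))⁻¹ y)
      simp only [Function.comp_apply, Equiv.Perm.coe_inv, Equiv.apply_symm_apply] at h2
      simpa only [Equiv.Perm.mul_apply, Equiv.Perm.coe_inv] using h2
    obtain ⟨a, b, hE, hu, hv⟩ := sumMap_factor _ hpt
    have heL : (t : Equiv.Perm (Fin p ⊕ Fin q)) * h⁻¹
        * (t' : Equiv.Perm (Fin p ⊕ Fin q))⁻¹ ∈ L := by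
      rw [hL]
      exact ⟨(a, b), hE.symm⟩
    have htt' : (fun s : T => DoubleCoset.mk L H (s : Equiv.Perm (Fin p ⊕ Fin q))) t
        = (fun s : T => DoubleCoset.mk L H (s : Equiv.Perm (Fin p ⊕ Fin q))) t' := by
      show DoubleCoset.mk L H _ = DoubleCoset.mk L H _
      rw [DoubleCoset.eq]
      refine ⟨_, L.inv_mem heL, h⁻¹, H.inv_mem hh, ?_⟩
      group
    have ht2 : t = t' := hT.1 htt'
    subst ht2
    have hc : (Quotient.mk (prodPermSetoid p q X Y (W t)) (u, v))
        = Quotient.mk _ (u', v') := by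
      apply Quotient.sound
      refine ⟨a⁻¹, b⁻¹, ?_, by simpa using hu, by simpa using hv⟩
      constructor
      · rw [hL]; exact ⟨(a⁻¹, b⁻¹), rfl⟩
      · refine Subgroup.mem_map.mpr ⟨h, hh, ?_⟩
        have h3 : Equiv.Perm.sumCongrHom (Fin p) (Fin q) (a⁻¹, b⁻¹)
            = ((Equiv.Perm.sumCongrHom (Fin p) (Fin q)) (a, b))⁻¹ := by
          rw [← map_inv]; rfl
        rw [h3]
        simp only [MulEquiv.coe_toMonoidHom, MulAut.conj_apply]
        show (t : Equiv.Perm (Fin p ⊕ Fin q)) * h * (t : Equiv.Perm (Fin p ⊕ Fin q))⁻¹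
          = (Equiv.sumCongr a b)⁻¹
        rw [← hE]
        group
    rw [hc]
  have hsurj : Function.Surjective F := by
    rintro c
    obtain ⟨⟨f, hf⟩, rfl⟩ := Quotient.exists_rep c
    obtain ⟨u, v, σ, hfd⟩ := exists_decomp f hf
    obtain ⟨t, ht⟩ := hT.2 (DoubleCoset.mk L H σ)
    rw [DoubleCoset.eq] at ht
    obtain ⟨l, hl, k, hk, hσ⟩ := ht
    rw [hL, MonoidHom.mem_range] at hl
    obtain ⟨⟨a, b⟩, rfl⟩ := hl
    refine ⟨⟨t, Quotient.mk _ (u ∘ ⇑a, v ∘ ⇑b)⟩, ?_⟩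
    apply Quotient.sound
    refine ⟨k⁻¹, H.inv_mem hk, ?_⟩
    funext x
    show f x = Sum.map (u ∘ ⇑a) (v ∘ ⇑b)
      ((t : Equiv.Perm (Fin p ⊕ Fin q)) (((k⁻¹ : Equiv.Perm (Fin p ⊕ Fin q))⁻¹) x))
    rw [hfd, hσ]
    simp only [inv_inv, Equiv.Perm.mul_apply, Function.comp_apply,
      Equiv.Perm.sumCongrHom_apply]
    rcases (t : Equiv.Perm (Fin p ⊕ Fin q)) ((k : Equiv.Perm (Fin p ⊕ Fin q)) x) with i | j
      <;> simp
  exact ⟨(Equiv.ofBijective F ⟨hinj, hsurj⟩).symm⟩
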